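/- If F : ℝ^d → ℝ is twice differentiable with H-Lipschitz Hessian (H-second-order-smooth), and x is a (H/2, ε)-stationary point of F, then ‖∇F(x)‖ ≤ 2ε. -/

import Mathlib

open MeasureTheory
open scoped Gradient

/-- `x` is a `(lam, eps)`-stationary point of `F`. -/
def IsStationaryPoint {d : ℕ} (F : EuclideanSpace ℝ (Fin d) → ℝ) (lam eps : ℝ)
    (x : EuclideanSpace ℝ (Fin d)) : Prop :=
  ∃ p : Measure (EuclideanSpace ℝ (Fin d)), IsProbabilityMeasure p ∧
    Integrable (fun y => y) p ∧ Integrable (fun y => ∇ F y) p ∧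
    Integrable (fun y => ‖y - x‖ ^ 2) p ∧
    (∫ y, y ∂p) = x ∧
    ‖∫ y, ∇ F y ∂p‖ + lam * ∫ y, ‖y - x‖ ^ 2 ∂p ≤ eps

open InnerProductSpace in
lemma seg_norm_le {E : Type*} [NormedAddCommGroup E] [NormedSpace ℝ E]
    {x y z : E} (hz : z ∈ segment ℝ x y) : ‖z - x‖ ≤ ‖y - x‖ := by
  obtain ⟨a, b, ha, hb, hab, rfl⟩ := hz
  have : a • x + b • y - x = b • (y - x) := by
    have : a = 1 - b := by linarith
    subst this
    module
  rw [this, norm_smul]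
  simp only [Real.norm_eq_abs, abs_of_nonneg hb]
  nlinarith [norm_nonneg (y - x)]

lemma key {d : ℕ} (F : EuclideanSpace ℝ (Fin d) → ℝ) (H : ℝ) (hH : 0 ≤ H)
    (hF : ContDiff ℝ 2 F)
    (hhess : ∀ x y : EuclideanSpace ℝ (Fin d),
      ‖fderiv ℝ (fderiv ℝ F) x - fderiv ℝ (fderiv ℝ F) y‖ ≤ H * ‖x - y‖)
    (x y : EuclideanSpace ℝ (Fin d)) :
    ‖fderiv ℝ F y - fderiv ℝ F x - (fderiv ℝ (fderiv ℝ F) x) (y - x)‖ ≤ H * ‖y - x‖ ^ 2 := by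
  have hdiff : ContDiff ℝ 1 (fderiv ℝ F) := hF.fderiv_right (le_refl 2)
  have := Convex.norm_image_sub_le_of_norm_hasFDerivWithin_le'
    (f := fderiv ℝ F) (f' := fderiv ℝ (fderiv ℝ F)) (φ := fderiv ℝ (fderiv ℝ F) x)
    (s := segment ℝ x y) (C := H * ‖y - x‖)
    (fun z _ => ((hdiff.differentiable one_ne_zero z).hasFDerivAt).hasFDerivWithinAt)
    (fun z hz => (hhess z x).trans (by gcongr; exact seg_norm_le hz))
    (convex_segment x y) (left_mem_segment ℝ x y) (right_mem_segment ℝ x y)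
  calc ‖_‖ ≤ H * ‖y - x‖ * ‖y - x‖ := this
    _ = H * ‖y - x‖ ^ 2 := by ring

/-- If `F` is twice differentiable with `H`-Lipschitz Hessian and `x` is an
`(H/2, ε)`-stationary point, then `‖∇F(x)‖ ≤ 2ε`. -/
theorem norm_grad_le_of_stationary_secondOrderSmooth {d : ℕ}
    (F : EuclideanSpace ℝ (Fin d) → ℝ) (H ε : ℝ) (hH : 0 < H) (hε : 0 < ε)
    (hF : ContDiff ℝ 2 F)
    (hhess : ∀ x y : EuclideanSpace ℝ (Fin d),
      ‖fderiv ℝ (fderiv ℝ F) x - fderiv ℝ (fderiv ℝ F) y‖ ≤ H * ‖x - y‖)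
    (x : EuclideanSpace ℝ (Fin d))
    (hx : IsStationaryPoint F (H / 2) ε x) :
    ‖∇ F x‖ ≤ 2 * ε := by
  open InnerProductSpace in
  obtain ⟨p, hp, hiy, hig, hisq, hmean, hbound⟩ := hx
  set T : (StrongDual ℝ (EuclideanSpace ℝ (Fin d))) →L[ℝ] EuclideanSpace ℝ (Fin d) :=
    (toDual ℝ (EuclideanSpace ℝ (Fin d))).symm.toLinearIsometry.toContinuousLinearMap with hT
  set A : EuclideanSpace ℝ (Fin d) →L[ℝ] EuclideanSpace ℝ (Fin d) :=
    T.comp (fderiv ℝ (fderiv ℝ F) x) with hA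
  have hiyx : Integrable (fun y => y - x) p := hiy.sub (integrable_const x)
  have hmean0 : (∫ y, (y - x) ∂p) = 0 := by
    rw [integral_sub hiy (integrable_const x), hmean, integral_const]
    simp [hp.measure_univ]
  have hiA : Integrable (fun y => A (y - x)) p := A.integrable_comp hiyx
  set g : EuclideanSpace ℝ (Fin d) → EuclideanSpace ℝ (Fin d) := fun y => ∇ F y - ∇ F x - A (y - x) with hg
  have hgi : Integrable g p := (hig.sub (integrable_const (∇ F x))).sub hiA
  have hgnorm : ∀ y, ‖g y‖ ≤ H * ‖y - x‖ ^ 2 := by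
    intro y
    have : g y = (toDual ℝ (EuclideanSpace ℝ (Fin d))).symm
        (fderiv ℝ F y - fderiv ℝ F x - (fderiv ℝ (fderiv ℝ F) x) (y - x)) := by
      simp [hg, gradient, hA, hT, map_sub]
    rw [this, LinearIsometryEquiv.norm_map]
    exact key F H hH.le hF hhess x y
  have hintA : (∫ y, A (y - x) ∂p) = 0 := by
    rw [A.integral_comp_comm hiyx, hmean0, map_zero]
  have hgint : (∫ y, g y ∂p) = (∫ y, ∇ F y ∂p) - ∇ F x := by
    simp only [hg]
    have hs1 : Integrable (fun y => ∇ F y - ∇ F x) p := hig.sub (integrable_const _)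
    rw [integral_sub hs1 hiA, integral_sub hig (integrable_const _), hintA, integral_const]
    simp [hp.measure_univ]
  have hsplit : ∇ F x = (∫ y, ∇ F y ∂p) - ∫ y, g y ∂p := by
    rw [hgint]; abel
  have h1 : ‖∫ y, g y ∂p‖ ≤ H * ∫ y, ‖y - x‖ ^ 2 ∂p := by
    calc ‖∫ y, g y ∂p‖ ≤ ∫ y, ‖g y‖ ∂p := norm_integral_le_integral_norm _
      _ ≤ ∫ y, H * ‖y - x‖ ^ 2 ∂p :=
        integral_mono hgi.norm (hisq.const_mul H) fun y => hgnorm y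
      _ = H * ∫ y, ‖y - x‖ ^ 2 ∂p := integral_const_mul H _
  have h2 : ‖∇ F x‖ ≤ ‖∫ y, ∇ F y ∂p‖ + ‖∫ y, g y ∂p‖ := by
    rw [hsplit]; exact norm_sub_le _ _
  have h3 : (0:ℝ) ≤ ∫ y, ‖y - x‖ ^ 2 ∂p := integral_nonneg fun y => by positivity
  have h4 : (0:ℝ) ≤ ‖∫ y, ∇ F y ∂p‖ := norm_nonneg _
  linarith
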